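/- Under M ⊥ R | X, Y, G=1, the baseline propensity score satisfies p(R=1 | X=x, Y=0, G=1) = E[OR(X,Y) | R=1, X=x, G=1] / ( E[OR(X,Y) | R=1, X=x, G=1] + p(R=0 | X=x, G=1)/p(R=1 | X=x, G=1) ), where OR(x,y) = [p(R=0|X=x,Y=y,G=1) p(R=1|X=x,Y=0,G=1)] / [p(R=1|X=x,Y=y,G=1) p(R=0|X=x,Y=0,G=1)]. -/

import Mathlib

open Finset Set Real

noncomputable def Pr {Ω : Type*} [Fintype Ω] (μ : Ω → ℝ) (A : Set Ω) : ℝ :=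
  ∑ ω, A.indicator μ ω

noncomputable def cPr {Ω : Type*} [Fintype Ω] (μ : Ω → ℝ) (A B : Set Ω) : ℝ :=
  Pr μ (A ∩ B) / Pr μ B

noncomputable def cE {Ω : Type*} [Fintype Ω] (μ : Ω → ℝ) (f : Ω → ℝ) (B : Set Ω) : ℝ :=
  (∑ ω, B.indicator (fun ω' => μ ω' * f ω') ω) / Pr μ B

noncomputable def OddsR {Ω 𝓧 : Type*} [Fintype Ω] (μ : Ω → ℝ) (X : Ω → 𝓧) (Y : Ω → ℝ)
    (R G : Ω → ℕ) (x : 𝓧) (y : ℝ) : ℝ :=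
  (cPr μ {ω | R ω = 0} {ω | X ω = x ∧ Y ω = y ∧ G ω = 1} *
      cPr μ {ω | R ω = 1} {ω | X ω = x ∧ Y ω = 0 ∧ G ω = 1}) /
  (cPr μ {ω | R ω = 1} {ω | X ω = x ∧ Y ω = y ∧ G ω = 1} *
      cPr μ {ω | R ω = 0} {ω | X ω = x ∧ Y ω = 0 ∧ G ω = 1})


lemma Pr_mono' {Ω : Type*} [Fintype Ω] (μ : Ω → ℝ) (hμ0 : ∀ ω, 0 ≤ μ ω) {A B : Set Ω}
    (h : A ⊆ B) : Pr μ A ≤ Pr μ B := by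
  classical
  apply Finset.sum_le_sum
  intro ω _
  by_cases hA : ω ∈ A
  · simp [Set.indicator_apply, hA, h hA]
  · by_cases hB : ω ∈ B <;> simp [Set.indicator_apply, hA, hB, hμ0 ω]

lemma Pr_split {Ω : Type*} [Fintype Ω] (μ : Ω → ℝ) (R : Ω → ℕ) (hR : ∀ ω, R ω = 0 ∨ R ω = 1)
    (B : Set Ω) :
    Pr μ B = Pr μ ({ω | R ω = 0} ∩ B) + Pr μ ({ω | R ω = 1} ∩ B) := by
  classical
  unfold Pr
  rw [← Finset.sum_add_distrib]
  apply Finset.sum_congr rfl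
  intro ω _
  rcases hR ω with h | h <;> by_cases hB : ω ∈ B <;>
    simp [Set.indicator_apply, h, hB]

theorem stmt5
    {Ω 𝓧 𝓜 : Type*} [Fintype Ω]
    (μ : Ω → ℝ) (X : Ω → 𝓧) (M : Ω → 𝓜) (Y : Ω → ℝ) (R G : Ω → ℕ)
    (hμ0 : ∀ ω, 0 ≤ μ ω) (hμ1 : ∑ ω, μ ω = 1)
    (hR : ∀ ω, R ω = 0 ∨ R ω = 1)
    (h0Y : (0 : ℝ) ∈ Set.range Y)
    (hpos : ∀ x ∈ Set.range X, ∀ m ∈ Set.range M, ∀ y ∈ Set.range Y, ∀ r : ℕ,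
      (r = 0 ∨ r = 1) →
      0 < Pr μ {ω | X ω = x ∧ M ω = m ∧ Y ω = y ∧ R ω = r ∧ G ω = 1})
    (hCI : ∀ (m : 𝓜) (r : ℕ) (x : 𝓧) (y : ℝ),
      0 < Pr μ {ω | X ω = x ∧ Y ω = y ∧ G ω = 1} →
      cPr μ {ω | M ω = m ∧ R ω = r} {ω | X ω = x ∧ Y ω = y ∧ G ω = 1} =
        cPr μ {ω | M ω = m} {ω | X ω = x ∧ Y ω = y ∧ G ω = 1} *
        cPr μ {ω | R ω = r} {ω | X ω = x ∧ Y ω = y ∧ G ω = 1})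
 :
    ∀ x ∈ Set.range X,
      cPr μ {ω | R ω = 1} {ω | X ω = x ∧ Y ω = 0 ∧ G ω = 1} =
        cE μ (fun ω => OddsR μ X Y R G (X ω) (Y ω)) {ω | R ω = 1 ∧ X ω = x ∧ G ω = 1} /
          (cE μ (fun ω => OddsR μ X Y R G (X ω) (Y ω)) {ω | R ω = 1 ∧ X ω = x ∧ G ω = 1} +
            cPr μ {ω | R ω = 0} {ω | X ω = x ∧ G ω = 1} /
              cPr μ {ω | R ω = 1} {ω | X ω = x ∧ G ω = 1}) := by
  classical
  intro x hx
  have hΩ : Nonempty Ω := by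
    rcases isEmpty_or_nonempty Ω with h | h
    · rw [Finset.univ_eq_empty, Finset.sum_empty] at hμ1; norm_num at hμ1
    · exact h
  obtain ⟨ω0⟩ := hΩ
  have hm : M ω0 ∈ Set.range M := ⟨ω0, rfl⟩
  set m := M ω0 with hmdef
  -- basic sets
  set B : ℝ → Set Ω := fun y => {ω | X ω = x ∧ Y ω = y ∧ G ω = 1} with hB
  set C : Set Ω := {ω | X ω = x ∧ G ω = 1} with hC
  -- positivity of joint events
  have hSpos : ∀ y ∈ Set.range Y, ∀ r : ℕ, (r = 0 ∨ r = 1) →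
      0 < Pr μ ({ω | R ω = r} ∩ B y) := by
    intro y hy r hr
    refine lt_of_lt_of_le (hpos x hx m hm y hy r hr) (Pr_mono' μ hμ0 ?_)
    intro ω hω
    obtain ⟨h1, h2, h3, h4, h5⟩ := hω
    exact ⟨h4, h1, h3, h5⟩
  have hTpos : ∀ r : ℕ, (r = 0 ∨ r = 1) → 0 < Pr μ ({ω | R ω = r} ∩ C) := by
    intro r hr
    refine lt_of_lt_of_le (hpos x hx m hm 0 h0Y r hr) (Pr_mono' μ hμ0 ?_)
    intro ω hω
    obtain ⟨h1, h2, h3, h4, h5⟩ := hω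
    exact ⟨h4, h1, h5⟩
  -- abbreviations for probabilities
  set p : ℕ → ℝ → ℝ := fun r y => Pr μ ({ω | R ω = r} ∩ B y) with hp
  set t : ℕ → ℝ := fun r => Pr μ ({ω | R ω = r} ∩ C) with ht
  have hp0pos : ∀ y ∈ Set.range Y, 0 < p 0 y := fun y hy => hSpos y hy 0 (Or.inl rfl)
  have hp1pos : ∀ y ∈ Set.range Y, 0 < p 1 y := fun y hy => hSpos y hy 1 (Or.inr rfl)
  have ht0pos : 0 < t 0 := hTpos 0 (Or.inl rfl)
  have ht1pos : 0 < t 1 := hTpos 1 (Or.inr rfl)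
  have hBsplit : ∀ y, Pr μ (B y) = p 0 y + p 1 y := fun y => Pr_split μ R hR (B y)
  have hCsplit : Pr μ C = t 0 + t 1 := Pr_split μ R hR C
  have hBpos : ∀ y ∈ Set.range Y, 0 < Pr μ (B y) := by
    intro y hy; rw [hBsplit y]; exact add_pos (hp0pos y hy) (hp1pos y hy)
  have hCpos : 0 < Pr μ C := by rw [hCsplit]; exact add_pos ht0pos ht1pos
  -- the conditioning event of cE is {R=1} ∩ C
  have hT1eq : {ω | R ω = 1 ∧ X ω = x ∧ G ω = 1} = {ω | R ω = 1} ∩ C := by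
    ext ω; simp [hC, Set.mem_inter_iff, and_assoc]
  -- fiberwise identity: inner fiber sums give p r y
  have hfiber : ∀ (r : ℕ) (y : ℝ),
      p r y = ∑ ω ∈ Finset.univ.filter (fun ω => Y ω = y),
        Set.indicator ({ω | R ω = r} ∩ C) μ ω := by
    intro r y
    rw [Finset.sum_filter, hp]
    apply Finset.sum_congr rfl
    intro ω _
    by_cases hy : Y ω = y
    · by_cases hω : ω ∈ {ω | R ω = r} ∩ C
      · obtain ⟨h1, h2, h3⟩ := hω
        have hS : ω ∈ {ω | R ω = r} ∩ B y := ⟨h1, h2, hy, h3⟩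
        have hT : ω ∈ {ω | R ω = r} ∩ C := Set.mem_inter h1 ⟨h2, h3⟩
        simp [Set.indicator_of_mem hS, Set.indicator_of_mem hT, hy]
      · have : ω ∉ {ω | R ω = r} ∩ B y := by
          intro ⟨h1, h2, h3, h4⟩; exact hω ⟨h1, h2, h4⟩
        simp [Set.indicator_of_notMem this, Set.indicator_of_notMem hω, hy]
    · have : ω ∉ {ω | R ω = r} ∩ B y := by
        intro ⟨h1, h2, h3, h4⟩; exact hy h3
      simp [Set.indicator_of_notMem this, hy]
  have hTfib : ∀ r : ℕ, t r = ∑ y ∈ Finset.univ.image Y, p r y := by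
    intro r
    have hfw := Finset.sum_fiberwise_of_maps_to (t := Finset.univ.image Y)
      (g := Y) (s := Finset.univ)
      (fun i _ => Finset.mem_image_of_mem Y (Finset.mem_univ i))
      (Set.indicator ({ω | R ω = r} ∩ C) μ)
    calc t r = ∑ ω, Set.indicator ({ω | R ω = r} ∩ C) μ ω := rfl
      _ = ∑ y ∈ Finset.univ.image Y, ∑ ω ∈ Finset.univ.filter (fun ω => Y ω = y),
            Set.indicator ({ω | R ω = r} ∩ C) μ ω := hfw.symm
      _ = ∑ y ∈ Finset.univ.image Y, p r y :=
          Finset.sum_congr rfl fun y _ => (hfiber r y).symm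
  -- values of the odds ratio
  have hOR : ∀ y ∈ Set.range Y,
      OddsR μ X Y R G x y * p 1 y = (p 1 0 / p 0 0) * p 0 y := by
    intro y hy
    have hB0 := hBpos 0 h0Y
    have hBy := hBpos y hy
    have h10 := hp1pos 0 h0Y
    have h00 := hp0pos 0 h0Y
    have h1y := hp1pos y hy
    have h0y := hp0pos y hy
    unfold OddsR cPr
    simp only [hp, hB] at h10 h00 h1y h0y hB0 hBy ⊢
    field_simp
  -- compute the numerator of cE
  have hNum : (∑ ω, Set.indicator {ω | R ω = 1 ∧ X ω = x ∧ G ω = 1}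
        (fun ω' => μ ω' * OddsR μ X Y R G (X ω') (Y ω')) ω) =
      (p 1 0 / p 0 0) * t 0 := by
    have step1 : ∀ ω, Set.indicator {ω | R ω = 1 ∧ X ω = x ∧ G ω = 1}
        (fun ω' => μ ω' * OddsR μ X Y R G (X ω') (Y ω')) ω =
        OddsR μ X Y R G x (Y ω) * Set.indicator ({ω | R ω = 1} ∩ C) μ ω := by
      intro ω
      by_cases hω : ω ∈ {ω | R ω = 1 ∧ X ω = x ∧ G ω = 1}
      · obtain ⟨h1, h2, h3⟩ := hω
        have hmem : ω ∈ ({ω | R ω = 1 ∧ X ω = x ∧ G ω = 1} : Set Ω) := ⟨h1, h2, h3⟩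
        have hmem2 : ω ∈ {ω | R ω = 1} ∩ C := Set.mem_inter h1 ⟨h2, h3⟩
        rw [Set.indicator_of_mem hmem, Set.indicator_of_mem hmem2, h2]
        ring
      · have hω2 : ω ∉ {ω | R ω = 1} ∩ C := fun h => hω ⟨h.1, h.2.1, h.2.2⟩
        rw [Set.indicator_of_notMem hω, Set.indicator_of_notMem hω2]
        ring
    calc (∑ ω, Set.indicator {ω | R ω = 1 ∧ X ω = x ∧ G ω = 1}
            (fun ω' => μ ω' * OddsR μ X Y R G (X ω') (Y ω')) ω)
        = ∑ ω, OddsR μ X Y R G x (Y ω) * Set.indicator ({ω | R ω = 1} ∩ C) μ ω :=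
          Finset.sum_congr rfl fun ω _ => step1 ω
      _ = ∑ y ∈ Finset.univ.image Y, ∑ ω ∈ Finset.univ.filter (fun ω => Y ω = y),
            OddsR μ X Y R G x (Y ω) * Set.indicator ({ω | R ω = 1} ∩ C) μ ω :=
          (Finset.sum_fiberwise_of_maps_to
            (fun i _ => Finset.mem_image_of_mem Y (Finset.mem_univ i)) _).symm
      _ = ∑ y ∈ Finset.univ.image Y, OddsR μ X Y R G x y * p 1 y := by
          refine Finset.sum_congr rfl fun y _ => ?_
          rw [hfiber 1 y, Finset.mul_sum]
          refine Finset.sum_congr rfl fun ω hω => ?_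
          rw [(Finset.mem_filter.1 hω).2]
      _ = ∑ y ∈ Finset.univ.image Y, (p 1 0 / p 0 0) * p 0 y := by
          refine Finset.sum_congr rfl fun y hy => ?_
          obtain ⟨ω, _, hωy⟩ := Finset.mem_image.1 hy
          exact hOR y ⟨ω, hωy⟩
      _ = (p 1 0 / p 0 0) * t 0 := by rw [← Finset.mul_sum, ← hTfib 0]
  -- putting it all together
  have hLHS : cPr μ {ω | R ω = 1} {ω | X ω = x ∧ Y ω = 0 ∧ G ω = 1} =
      p 1 0 / (p 0 0 + p 1 0) := by
    unfold cPr
    rw [show ({ω | X ω = x ∧ Y ω = 0 ∧ G ω = 1} : Set Ω) = B 0 from rfl, hBsplit 0]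
  have hE : cE μ (fun ω => OddsR μ X Y R G (X ω) (Y ω))
      {ω | R ω = 1 ∧ X ω = x ∧ G ω = 1} = (p 1 0 / p 0 0) * t 0 / t 1 := by
    unfold cE
    rw [hNum, hT1eq]
  have hrho0 : cPr μ {ω | R ω = 0} {ω | X ω = x ∧ G ω = 1} = t 0 / Pr μ C := rfl
  have hrho1 : cPr μ {ω | R ω = 1} {ω | X ω = x ∧ G ω = 1} = t 1 / Pr μ C := rfl
  rw [hLHS, hE, hrho0, hrho1]
  have h10 := hp1pos 0 h0Y
  have h00 := hp0pos 0 h0Y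
  have hρ : t 0 / Pr μ C / (t 1 / Pr μ C) = t 0 / t 1 := by
    rw [div_div_div_cancel_right₀]
    exact hCpos.ne'
  rw [hρ]
  have hden1 : (0:ℝ) < p 0 0 + p 1 0 := add_pos h00 h10
  have hden2 : (0:ℝ) < p 1 0 / p 0 0 * t 0 / t 1 + t 0 / t 1 :=
    add_pos (div_pos (mul_pos (div_pos h10 h00) ht0pos) ht1pos) (div_pos ht0pos ht1pos)
  rw [div_eq_div_iff hden1.ne' hden2.ne']
  field_simp
  ring
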